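/- Let F, G : ℝⁿ × ℝ → ℝ be measurable, let g₁, g₂ ∈ L¹(ℝⁿ) be nonnegative, and let ω : [0,∞) → [0,∞) be nondecreasing with ω(t) → 0 as t → 0⁺. Assume: (a) for every v ∈ ℝ, F(·,v) and G(·,v) are in L¹(ℝⁿ); (b) for Lebesgue-a.e. x ∈ ℝⁿ and all u, w ∈ ℝ, |F(x,u) − F(x,w)| ≤ g₁(x)·|u−w| and |G(x,u) − G(x,w)| ≤ g₂(x)·ω(|u−w|); (c) for every ball B ⊂ ℝⁿ, the map v ↦ ∫_B F(x,v) dx is differentiable at every v with derivative ∫_B G(x,v) dx. Then there exists a Lebesgue-null set C ⊂ ℝⁿ such that for every x ∉ C and every v ∈ ℝ the limits F̃(x,v) := lim_{r→0⁺} (1/|B_r(x)|)∫_{B_r(x)} F(y,v) dy and G̃(x,v) := lim_{r→0⁺} (1/|B_r(x)|)∫_{B_r(x)} G(y,v) dy exist, and for every x ∉ C the map v ↦ F̃(x,v) is continuously differentiable on ℝ with derivative v ↦ G̃(x,v). -/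

import Mathlib

open MeasureTheory Filter Set
open Metric Topology
open scoped Interval


lemma aux_ball_vol {n : ℕ} (x : EuclideanSpace ℝ (Fin n)) {r : ℝ} (hr : 0 < r) :
    (volume : Measure (EuclideanSpace ℝ (Fin n))) (closedBall x r) = volume (ball x r) := by
  have h := Measure.addHaar_sphere_of_ne_zero (volume : Measure (EuclideanSpace ℝ (Fin n))) x hr.ne'
  refine le_antisymm ?_ (measure_mono ball_subset_closedBall)
  calc volume (closedBall x r) ≤ volume (ball x r ∪ sphere x r) := by rw [ball_union_sphere]
  _ ≤ volume (ball x r) + volume (sphere x r) := measure_union_le _ _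
  _ = volume (ball x r) := by rw [h, add_zero]

lemma aux_ball_ae {n : ℕ} (x : EuclideanSpace ℝ (Fin n)) {r : ℝ} (hr : 0 < r) :
    (ball x r : Set (EuclideanSpace ℝ (Fin n))) =ᵐ[volume] closedBall x r := by
  have h := Measure.addHaar_sphere_of_ne_zero (volume : Measure (EuclideanSpace ℝ (Fin n))) x hr.ne'
  rw [ae_eq_set]
  constructor
  · rw [diff_eq_empty.2 ball_subset_closedBall]; simp
  · refine measure_mono_null ?_ h
    rw [← ball_union_sphere]
    exact fun y hy => hy.1.resolve_left hy.2

lemma aux_lebesgue_pt {n : ℕ} (f : EuclideanSpace ℝ (Fin n) → ℝ) (hf : Integrable f) :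
    ∀ᵐ x ∂(volume : Measure (EuclideanSpace ℝ (Fin n))),
      Tendsto (fun r : ℝ => (volume (ball x r)).toReal⁻¹ * ∫ y in ball x r, f y)
        (𝓝[>] (0:ℝ)) (𝓝 (f x)) := by
  filter_upwards [IsUnifLocDoublingMeasure.ae_tendsto_average volume hf.locallyIntegrable 1] with x hx
  have h1 : Tendsto (fun r : ℝ => ⨍ y in closedBall x r, f y) (𝓝[>] (0:ℝ)) (𝓝 (f x)) :=
    hx (fun _ => x) id tendsto_id
      (by filter_upwards [self_mem_nhdsWithin] with r (hr : 0 < r); simp [le_of_lt hr])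
  refine h1.congr' ?_
  filter_upwards [self_mem_nhdsWithin] with r (hr : 0 < r)
  rw [setAverage_eq, measureReal_def, aux_ball_vol x hr,
    setIntegral_congr_set (aux_ball_ae x hr), smul_eq_mul]

lemma aux_avg_bound {n : ℕ} (B : Set (EuclideanSpace ℝ (Fin n)))
    (f g h : EuclideanSpace ℝ (Fin n) → ℝ)
    (hf : IntegrableOn f B) (hg : IntegrableOn g B) (hh : IntegrableOn h B)
    (hfg : ∀ᵐ y ∂(volume.restrict B), |f y - g y| ≤ h y) (c : ℝ) (hc : 0 ≤ c) :
    |c * (∫ y in B, f y) - c * ∫ y in B, g y| ≤ c * ∫ y in B, h y := by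
  rw [← mul_sub, abs_mul, abs_of_nonneg hc, ← integral_sub hf hg]
  refine mul_le_mul_of_nonneg_left ?_ hc
  calc |∫ y in B, (f y - g y)| ≤ ∫ y in B, |f y - g y| := by
        simpa [Real.norm_eq_abs] using norm_integral_le_integral_norm (fun y => f y - g y)
    _ ≤ ∫ y in B, h y :=
        integral_mono_of_nonneg (Eventually.of_forall fun y => abs_nonneg _) hh hfg

lemma aux_ftc {n : ℕ} (F G : EuclideanSpace ℝ (Fin n) → ℝ → ℝ)
    (hGmeas : Measurable (Function.uncurry G))
    (g₂ : EuclideanSpace ℝ (Fin n) → ℝ) (hg₂ : Integrable g₂) (hg₂nn : ∀ x, 0 ≤ g₂ x)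
    (ω : ℝ → ℝ)
    (hω_mono : ∀ s t, 0 ≤ s → s ≤ t → ω s ≤ ω t)
    (ha : ∀ v : ℝ, Integrable (fun x => F x v) ∧ Integrable (fun x => G x v))
    (hbG : ∀ᵐ x ∂(volume : Measure (EuclideanSpace ℝ (Fin n))), ∀ u w : ℝ,
      |G x u - G x w| ≤ g₂ x * ω |u - w|)
    (hc : ∀ (x₀ : EuclideanSpace ℝ (Fin n)) (r : ℝ), 0 < r → ∀ v : ℝ,
      HasDerivAt (fun v' => ∫ y in Metric.ball x₀ r, F y v')
        (∫ y in Metric.ball x₀ r, G y v) v)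
    (v : ℝ) :
    ∀ᵐ x ∂(volume : Measure (EuclideanSpace ℝ (Fin n))),
      F x v - F x 0 = ∫ t in (0:ℝ)..v, G x t := by
  set ν : Measure ℝ := volume.restrict (Ι (0:ℝ) v) with hν
  haveI : IsFiniteMeasure ν := by
    constructor
    rw [hν, Measure.restrict_apply_univ, Set.uIoc, Real.volume_Ioc]
    exact ENNReal.ofReal_lt_top
  set c0 : EuclideanSpace ℝ (Fin n) → ℝ := fun y => |G y 0| + g₂ y * ω |v| with hc0def
  have hc0 : Integrable c0 := (ha 0).2.abs.add (hg₂.mul_const _)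
  have habs : ∀ t ∈ Ι (0:ℝ) v, |t| ≤ |v| := by
    intro t ht
    rcases Set.mem_uIoc.mp ht with ⟨h1, h2⟩ | ⟨h1, h2⟩
    · rw [abs_of_pos h1]; exact h2.trans (le_abs_self v)
    · rw [abs_of_nonpos h2]; exact (neg_le_neg h1.le).trans (neg_le_abs v)
  have hGb : ∀ᵐ y ∂(volume : Measure (EuclideanSpace ℝ (Fin n))),
      ∀ t ∈ Ι (0:ℝ) v, |G y t| ≤ c0 y := by
    filter_upwards [hbG] with y hy t ht
    have h1 : |G y t| - |G y 0| ≤ |G y t - G y 0| := abs_sub_abs_le_abs_sub _ _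
    have h2 : |G y t - G y 0| ≤ g₂ y * ω |t - 0| := hy t 0
    have h3 : ω |t - 0| ≤ ω |v| := by
      rw [sub_zero]; exact hω_mono _ _ (abs_nonneg _) (habs t ht)
    have h4 : g₂ y * ω |t - 0| ≤ g₂ y * ω |v| := mul_le_mul_of_nonneg_left h3 (hg₂nn y)
    simp only [hc0def]; linarith
  set ψ : EuclideanSpace ℝ (Fin n) → ℝ := fun y => ∫ t in (0:ℝ)..v, G y t with hψdef
  set σ : ℝ := if (0:ℝ) ≤ v then (1:ℝ) else -1 with hσ
  have hψ_eq : ∀ y, ψ y = σ • ∫ t, G y t ∂ν :=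
    fun y => intervalIntegral.intervalIntegral_eq_integral_uIoc _ _ _ _
  have hsm : StronglyMeasurable (fun y => ∫ t, G y t ∂ν) :=
    (hGmeas.stronglyMeasurable).integral_prod_right'
  have hψm : AEStronglyMeasurable ψ (volume : Measure (EuclideanSpace ℝ (Fin n))) := by
    have : ψ = fun y => σ • ∫ t, G y t ∂ν := funext hψ_eq
    rw [this]; exact (hsm.const_smul σ).aestronglyMeasurable
  have hψint : Integrable ψ := by
    refine Integrable.mono' (hc0.mul_const |v - 0|) hψm ?_
    filter_upwards [hGb] with y hy
    exact intervalIntegral.norm_integral_le_of_norm_le_const (f := fun t => G y t) (C := c0 y)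
        (fun t ht => by rw [Real.norm_eq_abs]; exact hy t ht)
  have keyball : ∀ (x₀ : EuclideanSpace ℝ (Fin n)) (r : ℝ), 0 < r →
      ∫ y in ball x₀ r, (F y v - F y 0 - ψ y) = 0 := by
    intro x₀ r hr
    set B := ball x₀ r with hB
    have hbB : ∀ᵐ y ∂(volume.restrict B), ∀ t ∈ Ι (0:ℝ) v, |G y t| ≤ c0 y := ae_restrict_of_ae hGb
    have hGsm : AEStronglyMeasurable (fun p : EuclideanSpace ℝ (Fin n) × ℝ => G p.1 p.2)
        ((volume.restrict B).prod ν) := hGmeas.aestronglyMeasurable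
    have hprod : Integrable (fun p : EuclideanSpace ℝ (Fin n) × ℝ => G p.1 p.2)
        ((volume.restrict B).prod ν) := by
      rw [integrable_prod_iff hGsm]
      constructor
      · filter_upwards [hbB] with y hy
        refine Integrable.mono' (integrable_const (c0 y))
          ((hGmeas.comp (measurable_const.prodMk measurable_id)).aestronglyMeasurable) ?_
        filter_upwards [ae_restrict_mem measurableSet_uIoc] with t ht
        simpa [Real.norm_eq_abs] using hy t ht
      · refine Integrable.mono' (g := fun y => (ν univ).toReal * c0 y)
          ((hc0.const_mul _).restrict)
          (((hGmeas.stronglyMeasurable.norm).integral_prod_right').aestronglyMeasurable.restrict) ?_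
        filter_upwards [hbB] with y hy
        rw [Real.norm_eq_abs, abs_of_nonneg (integral_nonneg fun t => norm_nonneg _)]
        calc ∫ t, ‖G y t‖ ∂ν ≤ ∫ _t, c0 y ∂ν :=
              integral_mono_of_nonneg (Eventually.of_forall fun t => norm_nonneg _)
                (integrable_const _)
                (by filter_upwards [ae_restrict_mem measurableSet_uIoc] with t ht;
                    simpa [Real.norm_eq_abs] using hy t ht)
          _ = (ν univ).toReal * c0 y := by rw [integral_const, smul_eq_mul, measureReal_def]
    have hswap := integral_integral_swap (f := fun y t => G y t) hprod
    set k : ℝ → ℝ := fun v' => ∫ y in B, F y v' with hk_def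
    have hk : ∀ t : ℝ, HasDerivAt k (∫ y in B, G y t) t := hc x₀ r hr
    set M := ∫ y in B, c0 y with hM
    have hderiv_meas : Measurable fun t => ∫ y in B, G y t := by
      have : (fun t => ∫ y in B, G y t) = deriv k := funext fun t => ((hk t).deriv).symm
      rw [this]; exact measurable_deriv k
    have hbdd : ∀ t ∈ Ι (0:ℝ) v, ‖∫ y in B, G y t‖ ≤ M := by
      intro t ht
      rw [Real.norm_eq_abs]
      calc |∫ y in B, G y t| ≤ ∫ y in B, |G y t| := by
            simpa [Real.norm_eq_abs] using norm_integral_le_integral_norm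
              (μ := volume.restrict B) (fun y => G y t)
        _ ≤ M := integral_mono_of_nonneg (Eventually.of_forall fun y => abs_nonneg _)
              hc0.integrableOn (by filter_upwards [hbB] with y hy using hy t ht)
    have hII : IntervalIntegrable (fun t => ∫ y in B, G y t) volume 0 v := by
      rw [intervalIntegrable_iff]
      refine Integrable.mono' (integrable_const M) hderiv_meas.aestronglyMeasurable.restrict ?_
      filter_upwards [ae_restrict_mem measurableSet_uIoc] with t ht using hbdd t ht
    have hftc := intervalIntegral.integral_eq_sub_of_hasDerivAt
      (f := k) (f' := fun t => ∫ y in B, G y t) (fun t _ => hk t) hII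
    have hFv : IntegrableOn (fun y => F y v) B := (ha v).1.integrableOn
    have hF0 : IntegrableOn (fun y => F y 0) B := (ha 0).1.integrableOn
    have hψB : IntegrableOn ψ B := hψint.integrableOn
    have hmain : ∫ y in B, ψ y = ∫ t in (0:ℝ)..v, (∫ y in B, G y t) := by
      calc ∫ y in B, ψ y = ∫ y in B, σ • ∫ t, G y t ∂ν := by
            exact integral_congr_ae (Eventually.of_forall fun y => hψ_eq y)
        _ = σ • ∫ y in B, ∫ t, G y t ∂ν := integral_smul σ _
        _ = σ • ∫ t, (∫ y in B, G y t) ∂ν := by rw [hswap]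
        _ = ∫ t in (0:ℝ)..v, (∫ y in B, G y t) :=
            (intervalIntegral.intervalIntegral_eq_integral_uIoc
              (fun t => ∫ y in B, G y t) 0 v volume).symm
    have h1 : IntegrableOn (fun y => F y v - F y 0) B volume := hFv.sub hF0
    rw [integral_sub h1 hψB, integral_sub hFv hF0, hmain, hftc]
    simp [hk_def]
  have hΦint : Integrable (fun x => F x v - F x 0 - ψ x) := ((ha v).1.sub (ha 0).1).sub hψint
  filter_upwards [aux_lebesgue_pt _ hΦint] with x hx
  have h0 : Tendsto (fun r : ℝ => (volume (ball x r)).toReal⁻¹ *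
      ∫ y in ball x r, (F y v - F y 0 - ψ y)) (𝓝[>] (0:ℝ)) (𝓝 0) := by
    refine Tendsto.congr' ?_ (tendsto_const_nhds (α := ℝ))
    filter_upwards [self_mem_nhdsWithin] with r (hr : 0 < r)
    rw [keyball x r hr, mul_zero]
  have := tendsto_nhds_unique hx h0
  have : F x v - F x 0 - ψ x = 0 := this
  linarith [this]


lemma aux_null_compl {α : Type*} [MeasurableSpace α] {μ : Measure α} {P : α → Prop}
    (h : ∀ᵐ x ∂μ, P x) : ∃ C : Set α, μ C = 0 ∧ ∀ x ∉ C, P x :=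
  ⟨{x | ¬ P x}, ae_iff.mp h, fun _ hx => not_not.mp hx⟩

lemma aux_ext {φ ψ γ : ℝ → ℝ} {Lq Lv γx D ε : ℝ} (hε : 0 < ε)
    (hγx : 0 ≤ γx) (hD : 0 ≤ D)
    (hDsmall : (2 * γx + 2) * D ≤ ε / 3)
    (hφψ : ∀ᶠ r in 𝓝[>] (0:ℝ), |φ r - ψ r| ≤ γ r * D)
    (hψ : Tendsto ψ (𝓝[>] (0:ℝ)) (𝓝 Lq))
    (hγ : Tendsto γ (𝓝[>] (0:ℝ)) (𝓝 γx))
    (hLq : |Lq - Lv| ≤ γx * D) :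
    ∀ᶠ r in 𝓝[>] (0:ℝ), |φ r - Lv| < ε := by
  have E1 := hγ.eventually_lt_const (show γx < γx + 1 by linarith)
  have E2 := Metric.tendsto_nhds.mp hψ (ε/3) (by positivity)
  filter_upwards [hφψ, E1, E2] with r h1 h2 h3
  rw [Real.dist_eq] at h3
  have b1 : γ r * D ≤ (γx + 1) * D := mul_le_mul_of_nonneg_right h2.le hD
  have a1 := abs_sub_le (φ r) (ψ r) Lv
  have a2 := abs_sub_le (ψ r) Lq Lv
  nlinarith [mul_nonneg hγx hD]


theorem stmt_18 (n : ℕ)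
    (F G : EuclideanSpace ℝ (Fin n) → ℝ → ℝ)
    (hFmeas : Measurable (Function.uncurry F))
    (hGmeas : Measurable (Function.uncurry G))
    (g₁ g₂ : EuclideanSpace ℝ (Fin n) → ℝ)
    (hg₁ : Integrable g₁) (hg₂ : Integrable g₂)
    (hg₁nn : ∀ x, 0 ≤ g₁ x) (hg₂nn : ∀ x, 0 ≤ g₂ x)
    (ω : ℝ → ℝ)
    (hω_nonneg : ∀ t, 0 ≤ t → 0 ≤ ω t)
    (hω_mono : ∀ s t, 0 ≤ s → s ≤ t → ω s ≤ ω t)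
    (hω_lim : Tendsto ω (nhdsWithin 0 (Set.Ioi 0)) (nhds 0))
    (ha : ∀ v : ℝ, Integrable (fun x => F x v) ∧ Integrable (fun x => G x v))
    (hb : ∀ᵐ x ∂(volume : Measure (EuclideanSpace ℝ (Fin n))), ∀ u w : ℝ,
      |F x u - F x w| ≤ g₁ x * |u - w| ∧ |G x u - G x w| ≤ g₂ x * ω |u - w|)
    (hc : ∀ (x₀ : EuclideanSpace ℝ (Fin n)) (r : ℝ), 0 < r → ∀ v : ℝ,
      HasDerivAt (fun v' => ∫ y in Metric.ball x₀ r, F y v')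
        (∫ y in Metric.ball x₀ r, G y v) v) :
    ∃ C : Set (EuclideanSpace ℝ (Fin n)), volume C = 0 ∧
      ∃ Ft Gt : EuclideanSpace ℝ (Fin n) → ℝ → ℝ,
        (∀ x ∉ C, ∀ v : ℝ,
          Tendsto (fun r : ℝ => (volume (Metric.ball x r)).toReal⁻¹ *
              ∫ y in Metric.ball x r, F y v)
            (nhdsWithin 0 (Set.Ioi 0)) (nhds (Ft x v)) ∧
          Tendsto (fun r : ℝ => (volume (Metric.ball x r)).toReal⁻¹ *
              ∫ y in Metric.ball x r, G y v)
            (nhdsWithin 0 (Set.Ioi 0)) (nhds (Gt x v))) ∧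
        (∀ x ∉ C, (∀ v : ℝ, HasDerivAt (Ft x) (Gt x v) v) ∧ Continuous (Gt x)) := by
  classical
  have HH : ∀ᵐ x ∂(volume : Measure (EuclideanSpace ℝ (Fin n))),
      (∀ u w : ℝ, |F x u - F x w| ≤ g₁ x * |u - w| ∧ |G x u - G x w| ≤ g₂ x * ω |u - w|) ∧
      Tendsto (fun r : ℝ => (volume (ball x r)).toReal⁻¹ * ∫ y in ball x r, g₁ y)
        (𝓝[>] (0:ℝ)) (𝓝 (g₁ x)) ∧
      Tendsto (fun r : ℝ => (volume (ball x r)).toReal⁻¹ * ∫ y in ball x r, g₂ y)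
        (𝓝[>] (0:ℝ)) (𝓝 (g₂ x)) ∧
      (∀ q : ℚ, Tendsto (fun r : ℝ => (volume (ball x r)).toReal⁻¹ *
        ∫ y in ball x r, F y (q:ℝ)) (𝓝[>] (0:ℝ)) (𝓝 (F x (q:ℝ)))) ∧
      (∀ q : ℚ, Tendsto (fun r : ℝ => (volume (ball x r)).toReal⁻¹ *
        ∫ y in ball x r, G y (q:ℝ)) (𝓝[>] (0:ℝ)) (𝓝 (G x (q:ℝ)))) ∧
      (∀ q : ℚ, F x (q:ℝ) - F x 0 = ∫ t in (0:ℝ)..(q:ℝ), G x t) := by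
    have H4 : ∀ᵐ x ∂(volume : Measure (EuclideanSpace ℝ (Fin n))),
        ∀ q : ℚ, Tendsto (fun r : ℝ => (volume (ball x r)).toReal⁻¹ *
          ∫ y in ball x r, F y (q:ℝ)) (𝓝[>] (0:ℝ)) (𝓝 (F x (q:ℝ))) :=
      ae_all_iff.mpr fun q => aux_lebesgue_pt _ (ha (q:ℝ)).1
    have H5 : ∀ᵐ x ∂(volume : Measure (EuclideanSpace ℝ (Fin n))),
        ∀ q : ℚ, Tendsto (fun r : ℝ => (volume (ball x r)).toReal⁻¹ *
          ∫ y in ball x r, G y (q:ℝ)) (𝓝[>] (0:ℝ)) (𝓝 (G x (q:ℝ))) :=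
      ae_all_iff.mpr fun q => aux_lebesgue_pt _ (ha (q:ℝ)).2
    have H6 : ∀ᵐ x ∂(volume : Measure (EuclideanSpace ℝ (Fin n))),
        ∀ q : ℚ, F x (q:ℝ) - F x 0 = ∫ t in (0:ℝ)..(q:ℝ), G x t :=
      ae_all_iff.mpr fun q => aux_ftc F G hGmeas g₂ hg₂ hg₂nn ω hω_mono ha
        (hb.mono fun x hx u w => (hx u w).2) hc (q:ℝ)
    filter_upwards [hb, aux_lebesgue_pt g₁ hg₁, aux_lebesgue_pt g₂ hg₂, H4, H5, H6] with
      x h1 h2 h3 h4 h5 h6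
    exact ⟨h1, h2, h3, h4, h5, h6⟩
  obtain ⟨C, hC0, hCP⟩ := aux_null_compl HH
  refine ⟨C, hC0, F, G, ?_, ?_⟩
  · intro x hx v
    obtain ⟨hbx, hg1x, hg2x, hFq, hGq, _⟩ := hCP x hx
    constructor
    · -- F part
      rw [Metric.tendsto_nhds]
      intro ε hε
      have hg1n : (0:ℝ) ≤ g₁ x := hg₁nn x
      have hdpos : 0 < ε / (3 * (2 * g₁ x + 2)) := by positivity
      obtain ⟨q, hq1, hq2⟩ := exists_rat_btwn (lt_add_of_pos_right v hdpos)
      have hvq : |v - (q:ℝ)| = (q:ℝ) - v := by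
        rw [abs_sub_comm, abs_of_pos (by linarith)]
      have hDsmall : (2 * g₁ x + 2) * |v - (q:ℝ)| ≤ ε / 3 := by
        rw [hvq]
        have h1 : (q:ℝ) - v ≤ ε / (3 * (2 * g₁ x + 2)) := by linarith
        have h2 : (2 * g₁ x + 2) * ((q:ℝ) - v) ≤ (2 * g₁ x + 2) * (ε / (3 * (2 * g₁ x + 2))) :=
          mul_le_mul_of_nonneg_left h1 (by linarith)
        have h3 : (2 * g₁ x + 2) * (ε / (3 * (2 * g₁ x + 2))) = ε / 3 := by
          field_simp
        linarith
      have hφψ : ∀ᶠ r in 𝓝[>] (0:ℝ),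
          |((volume (ball x r)).toReal⁻¹ * ∫ y in ball x r, F y v) -
            (volume (ball x r)).toReal⁻¹ * ∫ y in ball x r, F y (q:ℝ)|
          ≤ ((volume (ball x r)).toReal⁻¹ * ∫ y in ball x r, g₁ y) * |v - (q:ℝ)| := by
        filter_upwards [self_mem_nhdsWithin] with r (hr : 0 < r)
        have key := aux_avg_bound (ball x r) (fun y => F y v) (fun y => F y (q:ℝ))
          (fun y => g₁ y * |v - (q:ℝ)|) ((ha v).1.integrableOn) ((ha _).1.integrableOn)
          ((hg₁.mul_const _).integrableOn)
          (ae_restrict_of_ae (hb.mono fun y hy => (hy v (q:ℝ)).1))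
          ((volume (ball x r)).toReal⁻¹) (inv_nonneg.mpr ENNReal.toReal_nonneg)
        calc |((volume (ball x r)).toReal⁻¹ * ∫ y in ball x r, F y v) -
            (volume (ball x r)).toReal⁻¹ * ∫ y in ball x r, F y (q:ℝ)|
            ≤ (volume (ball x r)).toReal⁻¹ * ∫ y in ball x r, g₁ y * |v - (q:ℝ)| := key
          _ = ((volume (ball x r)).toReal⁻¹ * ∫ y in ball x r, g₁ y) * |v - (q:ℝ)| := by
              rw [integral_mul_const]; ring
      have hLq : |F x (q:ℝ) - F x v| ≤ g₁ x * |v - (q:ℝ)| := by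
        have := (hbx (q:ℝ) v).1
        rwa [abs_sub_comm (q:ℝ) v] at this
      have := aux_ext hε hg1n (abs_nonneg _) hDsmall hφψ (hFq q) hg1x hLq
      filter_upwards [this] with r hr
      rwa [Real.dist_eq]
    · -- G part
      rw [Metric.tendsto_nhds]
      intro ε hε
      have hg2n : (0:ℝ) ≤ g₂ x := hg₂nn x
      have hε'' : 0 < ε / (3 * (2 * g₂ x + 2)) := by positivity
      have hev := Metric.tendsto_nhds.mp hω_lim _ hε''
      rw [eventually_nhdsWithin_iff] at hev
      obtain ⟨δω, hδω, hωs⟩ := Metric.eventually_nhds_iff.mp hev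
      obtain ⟨q, hq1, hq2⟩ := exists_rat_btwn (lt_add_of_pos_right v hδω)
      have hd' : 0 < (q:ℝ) - v := by linarith
      have hvq : |v - (q:ℝ)| = (q:ℝ) - v := by rw [abs_sub_comm, abs_of_pos hd']
      have hωlt : ω |v - (q:ℝ)| < ε / (3 * (2 * g₂ x + 2)) := by
        have h0δ : dist |v - (q:ℝ)| 0 < δω := by
          rw [Real.dist_eq, sub_zero, abs_abs, hvq]; linarith
        have hmem : |v - (q:ℝ)| ∈ Ioi (0:ℝ) := by rw [hvq]; exact hd'
        have := hωs h0δ hmem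
        rwa [Real.dist_eq, sub_zero, abs_of_nonneg (hω_nonneg _ (abs_nonneg _))] at this
      have hωnn : 0 ≤ ω |v - (q:ℝ)| := hω_nonneg _ (abs_nonneg _)
      have hDsmall : (2 * g₂ x + 2) * ω |v - (q:ℝ)| ≤ ε / 3 := by
        have h2 : (2 * g₂ x + 2) * ω |v - (q:ℝ)|
            ≤ (2 * g₂ x + 2) * (ε / (3 * (2 * g₂ x + 2))) :=
          mul_le_mul_of_nonneg_left hωlt.le (by linarith)
        have h3 : (2 * g₂ x + 2) * (ε / (3 * (2 * g₂ x + 2))) = ε / 3 := by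
          field_simp
        linarith
      have hφψ : ∀ᶠ r in 𝓝[>] (0:ℝ),
          |((volume (ball x r)).toReal⁻¹ * ∫ y in ball x r, G y v) -
            (volume (ball x r)).toReal⁻¹ * ∫ y in ball x r, G y (q:ℝ)|
          ≤ ((volume (ball x r)).toReal⁻¹ * ∫ y in ball x r, g₂ y) * ω |v - (q:ℝ)| := by
        filter_upwards [self_mem_nhdsWithin] with r (hr : 0 < r)
        have key := aux_avg_bound (ball x r) (fun y => G y v) (fun y => G y (q:ℝ))
          (fun y => g₂ y * ω |v - (q:ℝ)|) ((ha v).2.integrableOn) ((ha _).2.integrableOn)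
          ((hg₂.mul_const _).integrableOn)
          (ae_restrict_of_ae (hb.mono fun y hy => (hy v (q:ℝ)).2))
          ((volume (ball x r)).toReal⁻¹) (inv_nonneg.mpr ENNReal.toReal_nonneg)
        calc |((volume (ball x r)).toReal⁻¹ * ∫ y in ball x r, G y v) -
            (volume (ball x r)).toReal⁻¹ * ∫ y in ball x r, G y (q:ℝ)|
            ≤ (volume (ball x r)).toReal⁻¹ * ∫ y in ball x r, g₂ y * ω |v - (q:ℝ)| := key
          _ = ((volume (ball x r)).toReal⁻¹ * ∫ y in ball x r, g₂ y) * ω |v - (q:ℝ)| := by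
              rw [integral_mul_const]; ring
      have hLq : |G x (q:ℝ) - G x v| ≤ g₂ x * ω |v - (q:ℝ)| := by
        have := (hbx (q:ℝ) v).2
        rwa [abs_sub_comm (q:ℝ) v] at this
      have := aux_ext hε hg2n hωnn hDsmall hφψ (hGq q) hg2x hLq
      filter_upwards [this] with r hr
      rwa [Real.dist_eq]
  · intro x hx
    obtain ⟨hbx, _, _, _, _, hftcx⟩ := hCP x hx
    have hGcont : Continuous (G x) := by
      rw [Metric.continuous_iff]
      intro b ε hε
      have hg2n : (0:ℝ) ≤ g₂ x := hg₂nn x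
      have hε' : 0 < ε / (g₂ x + 1) := by positivity
      have hev := Metric.tendsto_nhds.mp hω_lim _ hε'
      rw [eventually_nhdsWithin_iff] at hev
      obtain ⟨δω, hδω, hωs⟩ := Metric.eventually_nhds_iff.mp hev
      refine ⟨δω, hδω, fun a hab => ?_⟩
      rcases eq_or_ne a b with rfl | hne
      · simpa using hε
      · have h1 : |G x a - G x b| ≤ g₂ x * ω |a - b| := (hbx a b).2
        have habpos : 0 < |a - b| := abs_pos.mpr (sub_ne_zero.mpr hne)
        have h0δ : dist |a - b| 0 < δω := by
          rw [Real.dist_eq, sub_zero, abs_abs]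
          rw [Real.dist_eq] at hab
          exact hab
        have hωlt : ω |a - b| < ε / (g₂ x + 1) := by
          have := hωs h0δ habpos
          rwa [Real.dist_eq, sub_zero, abs_of_nonneg (hω_nonneg _ (abs_nonneg _))] at this
        have h2 : g₂ x * ω |a - b| ≤ g₂ x * (ε / (g₂ x + 1)) :=
          mul_le_mul_of_nonneg_left hωlt.le hg2n
        have h3 : g₂ x * (ε / (g₂ x + 1)) < ε := by
          have h4 : g₂ x * (ε / (g₂ x + 1)) < (g₂ x + 1) * (ε / (g₂ x + 1)) :=
            mul_lt_mul_of_pos_right (by linarith) hε'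
          have h5 : (g₂ x + 1) * (ε / (g₂ x + 1)) = ε := by field_simp
          linarith
        rw [Real.dist_eq]
        linarith
    have hR : ∀ v : ℝ, F x v - F x 0 = ∫ t in (0:ℝ)..v, G x t := by
      have hL : Continuous (fun v => F x v - F x 0) := by
        have hlip : LipschitzWith (Real.toNNReal (g₁ x)) (F x) := by
          refine LipschitzWith.of_dist_le_mul fun u w => ?_
          rw [Real.dist_eq, Real.dist_eq, Real.coe_toNNReal _ (hg₁nn x)]
          exact (hbx u w).1
        exact hlip.continuous.sub continuous_const
      have hRc : Continuous (fun v => ∫ t in (0:ℝ)..v, G x t) :=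
        intervalIntegral.continuous_primitive (fun a b => hGcont.intervalIntegrable a b) 0
      have heq : Set.EqOn (fun v => F x v - F x 0) (fun v => ∫ t in (0:ℝ)..v, G x t)
          (Set.range ((↑) : ℚ → ℝ)) := by
        rintro _ ⟨q, rfl⟩
        exact hftcx q
      have := Continuous.ext_on Rat.denseRange_cast hL hRc heq
      exact fun v => congrFun this v
    refine ⟨fun v => ?_, hGcont⟩
    have hprim : HasDerivAt (fun u => ∫ t in (0:ℝ)..u, G x t) (G x v) v :=
      (hGcont.integral_hasStrictDerivAt 0 v).hasDerivAt
    have hd : HasDerivAt (fun u => F x 0 + ∫ t in (0:ℝ)..u, G x t) (G x v) v :=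
      hprim.const_add (F x 0)
    have hfun : (fun u => F x 0 + ∫ t in (0:ℝ)..u, G x t) = F x := by
      funext u
      have := hR u
      linarith
    rwa [hfun] at hd
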